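/- Let E be a field of characteristic ≠ 2, L = E(√d) a quadratic extension, D₀ a quaternion division algebra over E with canonical involution τ₀, and D = D₀ ⊗_E L with unitary involution τ = τ₀ ⊗ ι. Let h₀ = ⟨α, −γα⟩ be a rank 2 hermitian form over (D₀, τ₀) with α, γ ∈ E*. If γ ∈ N_{L/E}(L*)·Nrd(D₀*), then the extension ρ̃(h₀) over (D, τ) is isotropic, hence hyperbolic. -/

import Mathlib

open scoped Quaternion

section Defs

variable {E L : Type*} [Field E] [Field L] [Algebra E L] (σ : L ≃ₐ[E] L)
variable {a b : L}

/-- The unitary involution `τ = τ₀ ⊗ ι` on `D = D₀ ⊗_E L = ℍ[L, a, b]`. -/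
def quatUnitaryInv (x : ℍ[L, a, b]) : ℍ[L, a, b] :=
  ⟨σ x.re, -σ x.imI, -σ x.imJ, -σ x.imK⟩

variable (a b)

/-- The diagonal hermitian form `⟨λᵢ⟩ᵢ` (`λᵢ ∈ E`) over `(D, τ)`. -/
def hermDiagTau {n : ℕ} (lam : Fin n → E) (x y : Fin n → ℍ[L, a, b]) :
    ℍ[L, a, b] :=
  ∑ i, quatUnitaryInv σ (x i) *
    algebraMap L ℍ[L, a, b] (algebraMap E L (lam i)) * y i

/-- Isometry of hermitian forms over `(D, τ)`: an `L`-linear, right `D`-linear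
equivalence matching the forms. -/
def HermFormIsoTau {n₁ n₂ : ℕ}
    (h₁ : (Fin n₁ → ℍ[L, a, b]) → (Fin n₁ → ℍ[L, a, b]) → ℍ[L, a, b])
    (h₂ : (Fin n₂ → ℍ[L, a, b]) → (Fin n₂ → ℍ[L, a, b]) → ℍ[L, a, b]) : Prop :=
  ∃ g : (Fin n₁ → ℍ[L, a, b]) ≃ₗ[L] (Fin n₂ → ℍ[L, a, b]),
    (∀ (x : Fin n₁ → ℍ[L, a, b]) (u : ℍ[L, a, b]),
      g (fun i => x i * u) = fun i => g x i * u) ∧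
    (∀ x y, h₂ (g x) (g y) = h₁ x y)

end Defs

section Aux

variable {E L : Type*} [Field E] [Field L] [Algebra E L] (σ : L ≃ₐ[E] L)
variable {a b : L}

lemma qti_add (x y : ℍ[L, a, b]) :
    quatUnitaryInv σ (x + y) = quatUnitaryInv σ x + quatUnitaryInv σ y := by
  ext <;> simp [quatUnitaryInv] <;> ring

lemma qti_mul (ha : σ a = a) (hb : σ b = b) (x y : ℍ[L, a, b]) :
    quatUnitaryInv σ (x * y) = quatUnitaryInv σ y * quatUnitaryInv σ x := by
  ext <;>
    simp [quatUnitaryInv, QuaternionAlgebra.re_mul, QuaternionAlgebra.imI_mul,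
      QuaternionAlgebra.imJ_mul, QuaternionAlgebra.imK_mul, ha, hb] <;> ring

lemma qti_one : quatUnitaryInv σ (1 : ℍ[L, a, b]) = 1 := by
  ext <;> simp [quatUnitaryInv]

lemma qti_qti (hσinv : ∀ x : L, σ (σ x) = x) (x : ℍ[L, a, b]) :
    quatUnitaryInv σ (quatUnitaryInv σ x) = x := by
  ext <;> simp [quatUnitaryInv, hσinv]

lemma qti_smul (t : E) (x : ℍ[L, a, b]) :
    quatUnitaryInv σ (t • x) = t • quatUnitaryInv σ x := by
  ext <;> simp [quatUnitaryInv, QuaternionAlgebra.re_smul, QuaternionAlgebra.imI_smul,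
    QuaternionAlgebra.imJ_smul, QuaternionAlgebra.imK_smul, smul_neg]

lemma algE (t : E) :
    algebraMap L ℍ[L, a, b] (algebraMap E L t) = t • (1 : ℍ[L, a, b]) := by
  rw [Algebra.algebraMap_eq_smul_one, algebraMap_smul]

lemma herm_term (t : E) (x y : ℍ[L, a, b]) :
    x * algebraMap L ℍ[L, a, b] (algebraMap E L t) * y = t • (x * y) := by
  rw [mul_assoc,
    show algebraMap L ℍ[L, a, b] (algebraMap E L t)
      = ((algebraMap E L t : L) : ℍ[L, a, b]) from rfl,
    QuaternionAlgebra.coe_mul_eq_smul, mul_smul_comm, algebraMap_smul]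

lemma tauw_mul_w (qa qb : E) (z : L) (u : ℍ[E, qa, qb]) :
    quatUnitaryInv σ
        (⟨z * algebraMap E L u.re, z * algebraMap E L u.imI, z * algebraMap E L u.imJ,
          z * algebraMap E L u.imK⟩ : ℍ[L, algebraMap E L qa, algebraMap E L qb]) *
      ⟨z * algebraMap E L u.re, z * algebraMap E L u.imI, z * algebraMap E L u.imJ,
        z * algebraMap E L u.imK⟩ =
    algebraMap L ℍ[L, algebraMap E L qa, algebraMap E L qb]
      (σ z * z * algebraMap E L ((u * star u).re)) := by
  ext <;>
    simp [quatUnitaryInv, QuaternionAlgebra.re_mul, QuaternionAlgebra.imI_mul,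
      QuaternionAlgebra.imJ_mul, QuaternionAlgebra.imK_mul,
      QuaternionAlgebra.coe_algebraMap, QuaternionAlgebra.re_coe, QuaternionAlgebra.imI_coe,
      QuaternionAlgebra.imJ_coe, QuaternionAlgebra.imK_coe, map_mul, map_add, map_sub,
      map_neg] <;> ring

lemma w_mul_tauw (qa qb : E) (z : L) (u : ℍ[E, qa, qb]) :
    (⟨z * algebraMap E L u.re, z * algebraMap E L u.imI, z * algebraMap E L u.imJ,
        z * algebraMap E L u.imK⟩ : ℍ[L, algebraMap E L qa, algebraMap E L qb]) *
      quatUnitaryInv σ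
        ⟨z * algebraMap E L u.re, z * algebraMap E L u.imI, z * algebraMap E L u.imJ,
          z * algebraMap E L u.imK⟩ =
    algebraMap L ℍ[L, algebraMap E L qa, algebraMap E L qb]
      (σ z * z * algebraMap E L ((u * star u).re)) := by
  ext <;>
    simp [quatUnitaryInv, QuaternionAlgebra.re_mul, QuaternionAlgebra.imI_mul,
      QuaternionAlgebra.imJ_mul, QuaternionAlgebra.imK_mul,
      QuaternionAlgebra.coe_algebraMap, QuaternionAlgebra.re_coe, QuaternionAlgebra.imI_coe,
      QuaternionAlgebra.imJ_coe, QuaternionAlgebra.imK_coe, map_mul, map_add, map_sub,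
      map_neg] <;> ring

end Aux

set_option maxHeartbeats 2000000 in
/-- **Hyperbolicity of `ρ̃(⟨α, −γα⟩)` when `γ` is a norm times a reduced norm.**
Let `E` be a field of characteristic `≠ 2`, `L = E(√d)` a quadratic extension with
nontrivial automorphism `ι`, `D₀` a quaternion division algebra over `E` with
canonical involution `τ₀` and reduced norm `Nrd`, and `D = D₀ ⊗_E L` with the
unitary involution `τ = τ₀ ⊗ ι`.  Let `h₀ = ⟨α, −γα⟩` be a rank-2 hermitian form
over `(D₀, τ₀)` with `α, γ ∈ E*`.  If `γ ∈ N_{L/E}(L*)·Nrd(D₀*)`, then the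
extension `ρ̃(h₀)` over `(D, τ)` is isotropic, hence hyperbolic. -/
theorem extended_rank_two_form_hyperbolic
    (E : Type*) [Field E] (hchar : (2 : E) ≠ 0)
    (d : E) (hd : ∀ c : E, c ^ 2 ≠ d)
    (L : Type*) [Field L] [Algebra E L]
    (s : L) (hs : s ^ 2 = algebraMap E L d)
    (σ : L ≃ₐ[E] L) (hσs : σ s = -s) (hσinv : ∀ x : L, σ (σ x) = x)
    (hbasis : ∀ x : L, ∃! p : E × E,
      x = algebraMap E L p.1 + algebraMap E L p.2 * s)
    (qa qb : E) (hdiv : ∀ x : ℍ[E, qa, qb], x ≠ 0 → IsUnit x)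
    (α γ : E) (hα : α ≠ 0) (hγ : γ ≠ 0)
    (hnorm : ∃ (z : L) (u : ℍ[E, qa, qb]), u ≠ 0 ∧
      algebraMap E L γ =
        σ z * z * algebraMap E L ((u * star u).re)) :
    (∃ x : Fin 2 → ℍ[L, algebraMap E L qa, algebraMap E L qb],
      x ≠ 0 ∧
      hermDiagTau σ (algebraMap E L qa) (algebraMap E L qb)
        ![α, -(γ * α)] x x = 0) ∧
    HermFormIsoTau (algebraMap E L qa) (algebraMap E L qb)
      (hermDiagTau σ (algebraMap E L qa) (algebraMap E L qb) ![α, -(γ * α)])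
      (hermDiagTau σ (algebraMap E L qa) (algebraMap E L qb) ![(1 : E), -1]) := by
  obtain ⟨z, u, hu, hγeq⟩ := hnorm
  set w : ℍ[L, algebraMap E L qa, algebraMap E L qb] :=
    ⟨z * algebraMap E L u.re, z * algebraMap E L u.imI, z * algebraMap E L u.imJ,
      z * algebraMap E L u.imK⟩ with hwdef
  have hqam := σ.commutes qa
  have hqbm := σ.commutes qb
  have hw1 : quatUnitaryInv σ w * w
      = algebraMap L ℍ[L, algebraMap E L qa, algebraMap E L qb] (algebraMap E L γ) := by
    rw [hγeq]; exact tauw_mul_w σ qa qb z u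
  have hw2 : w * quatUnitaryInv σ w
      = algebraMap L ℍ[L, algebraMap E L qa, algebraMap E L qb] (algebraMap E L γ) := by
    rw [hγeq]; exact w_mul_tauw σ qa qb z u
  have hone : (1 : ℍ[L, algebraMap E L qa, algebraMap E L qb]) ≠ 0 := by
    intro h1
    have := congrArg QuaternionAlgebra.re h1
    simp at this
  have hγα : γ * α ≠ 0 := mul_ne_zero hγ hα
  constructor
  · -- isotropy
    refine ⟨![w, 1], ?_, ?_⟩
    · intro h
      exact hone (by simpa using congrFun h 1)
    · simp only [hermDiagTau, Fin.sum_univ_two, Matrix.cons_val_zero, Matrix.cons_val_one,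
        Matrix.head_cons, herm_term, qti_one, one_mul, mul_one]
      rw [hw1, algE, smul_smul, ← add_smul,
        show α * γ + -(γ * α) = 0 by ring, zero_smul]
  · -- hyperbolicity
    set wi : ℍ[L, algebraMap E L qa, algebraMap E L qb] := γ⁻¹ • quatUnitaryInv σ w with hwidef
    have hwi1 : wi * w = 1 := by
      rw [hwidef, smul_mul_assoc, hw1, algE, smul_smul, inv_mul_cancel₀ hγ, one_smul]
    have hwi2 : w * wi = 1 := by
      rw [hwidef, mul_smul_comm, hw2, algE, smul_smul, inv_mul_cancel₀ hγ, one_smul]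
    have hwi1' : ∀ t : ℍ[L, algebraMap E L qa, algebraMap E L qb], wi * (w * t) = t := by
      intro t; rw [← mul_assoc, hwi1, one_mul]
    have hwi2' : ∀ t : ℍ[L, algebraMap E L qa, algebraMap E L qb], w * (wi * t) = t := by
      intro t; rw [← mul_assoc, hwi2, one_mul]
    have hww : ∀ t : ℍ[L, algebraMap E L qa, algebraMap E L qb],
        quatUnitaryInv σ w * (w * t) = γ • t := by
      intro t; rw [← mul_assoc, hw1, algE, smul_mul_assoc, one_mul]
    have hww' : ∀ t : ℍ[L, algebraMap E L qa, algebraMap E L qb],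
        w * (quatUnitaryInv σ w * t) = γ • t := by
      intro t; rw [← mul_assoc, hw2, algE, smul_mul_assoc, one_mul]
    set p : E := (1 + γ * α) / 2 with hp
    set q : E := (1 - γ * α) / 2 with hq
    set c : E := (γ * α)⁻¹ with hc
    refine ⟨⟨⟨⟨fun x => ![p • (wi * x 0) + q • x 1, q • (wi * x 0) + p • x 1], ?_⟩, ?_⟩,
      fun y => ![c • (p • (w * y 0)) - c • (q • (w * y 1)), c • (p • y 1) - c • (q • y 0)],
      ?_, ?_⟩, ?_, ?_⟩
    · -- map_add
      intro x y
      funext i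
      fin_cases i <;>
        simp [mul_add, smul_add] <;> abel
    · -- map_smul
      intro t x
      funext i
      fin_cases i <;>
        simp [mul_smul_comm, smul_add, smul_comm t]
    · -- left_inv
      intro x
      funext i
      fin_cases i <;>
      · simp only [Fin.mk_zero, Fin.mk_one, Fin.isValue, Matrix.cons_val_zero, Matrix.cons_val_one,
          Matrix.head_cons, mul_add, smul_add, mul_smul_comm, smul_smul, smul_sub, mul_sub,
          hwi2', hwi1']
        match_scalars <;> (try simp only [hp, hq, hc]) <;> (try field_simp) <;> try ring
    · -- right_inv
      intro y
      funext i
      fin_cases i <;>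
      · simp only [Fin.mk_zero, Fin.mk_one, Fin.isValue, Matrix.cons_val_zero, Matrix.cons_val_one,
          Matrix.head_cons, mul_add, smul_add, mul_smul_comm, smul_smul, smul_sub, mul_sub,
          hwi2', hwi1']
        match_scalars <;> (try simp only [hp, hq, hc]) <;> (try field_simp) <;> try ring
    · -- right D-linearity
      intro x v
      funext i
      fin_cases i <;>
        simp [add_mul, smul_mul_assoc, mul_assoc]
    · -- form matching
      intro x y
      simp only [hermDiagTau, Fin.sum_univ_two, Matrix.cons_val_zero, Matrix.cons_val_one,
        Matrix.head_cons, herm_term, LinearEquiv.coe_mk, LinearMap.coe_mk, AddHom.coe_mk]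
      simp only [qti_add, qti_smul, qti_mul σ hqam hqbm, qti_qti σ hσinv, hwidef]
      simp only [mul_add, add_mul, smul_mul_assoc, mul_smul_comm, smul_smul, smul_add,
        mul_assoc, hww, hww']
      match_scalars <;> (try simp only [hp, hq, hc]) <;> (try field_simp) <;> try ring
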